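/- Realizable sample compression generalization (concentration form): let Z be a measurable space, μ a probability measure on Z, k ≤ m natural numbers, and F : Z^k × Z → ℝ a measurable function with 0 ≤ F ≤ 1 (F(w, z) is the loss on z of the predictor reconstructed from the compression tuple w). Then for every ε ∈ (0,1), the μ^m-probability of the set of samples s ∈ Z^m for which there exists a map σ : Fin k → Fin m such that F(s ∘ σ, s j) = 0 for every j : Fin m and ∫ F(s ∘ σ, z) dμ(z) > ε, is at most m^k · (1 − ε)^{m − k}. -/

import Mathlib

open MeasureTheory

/-- Key pointwise estimate: if the true error of `w` exceeds `ε`, then the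
probability of zero loss at a random point is at most `1 - ε`. -/
private lemma zero_loss_prob_le
    {Z : Type*} [MeasurableSpace Z] (μ : Measure Z) [IsProbabilityMeasure μ]
    {k : ℕ} (F : (Fin k → Z) × Z → ℝ) (hF : Measurable F)
    (hF0 : ∀ w z, 0 ≤ F (w, z)) (hF1 : ∀ w z, F (w, z) ≤ 1)
    (ε : ℝ) (hε0 : 0 < ε) (w : Fin k → Z)
    (hb : ε < ∫ z, F (w, z) ∂μ) :
    μ {z | F (w, z) = 0} ≤ ENNReal.ofReal (1 - ε) := by
  have hmeas : Measurable fun z => F (w, z) := hF.comp (measurable_const.prodMk measurable_id)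
  set A : Set Z := {z | F (w, z) = 0} with hA
  have hAmeas : MeasurableSet A := hmeas (measurableSet_singleton 0)
  have hint : Integrable (fun z => F (w, z)) μ := by
    refine Integrable.mono' (integrable_const (1 : ℝ)) hmeas.aestronglyMeasurable ?_
    filter_upwards with z
    rw [Real.norm_eq_abs, abs_of_nonneg (hF0 w z)]
    exact hF1 w z
  have hind : Integrable (Aᶜ.indicator fun _ => (1 : ℝ)) μ :=
    (integrable_const (1 : ℝ)).indicator hAmeas.compl
  have hle : ∫ z, F (w, z) ∂μ ≤ (μ Aᶜ).toReal := by
    have hmono : ∀ z, F (w, z) ≤ Aᶜ.indicator (fun _ => (1 : ℝ)) z := by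
      intro z
      by_cases hz : z ∈ Aᶜ
      · rw [Set.indicator_of_mem hz]; exact hF1 w z
      · rw [Set.indicator_of_notMem hz]
        have : z ∈ A := by simpa using hz
        simp only [hA, Set.mem_setOf_eq] at this
        rw [this]
    calc ∫ z, F (w, z) ∂μ ≤ ∫ z, Aᶜ.indicator (fun _ => (1 : ℝ)) z ∂μ :=
          integral_mono hint hind hmono
      _ = (μ Aᶜ).toReal := by
          rw [integral_indicator_const _ hAmeas.compl, smul_eq_mul, mul_one]; rfl
  -- from `ε < (μ Aᶜ).toReal` deduce `ENNReal.ofReal ε ≤ μ Aᶜ`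
  have hεA : ENNReal.ofReal ε ≤ μ Aᶜ :=
    ENNReal.ofReal_le_of_le_toReal (le_of_lt (lt_of_lt_of_le hb hle))
  have hsum : μ A + μ Aᶜ = 1 := by
    rw [measure_add_measure_compl hAmeas, measure_univ]
  have h1 : μ A ≤ 1 - ENNReal.ofReal ε := by
    refine ENNReal.le_sub_of_add_le_right ENNReal.ofReal_ne_top ?_
    calc μ A + ENNReal.ofReal ε ≤ μ A + μ Aᶜ := add_le_add_right hεA _
      _ = 1 := hsum
  calc μ A ≤ 1 - ENNReal.ofReal ε := h1
    _ = ENNReal.ofReal (1 - ε) := by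
        rw [ENNReal.ofReal_sub 1 (le_of_lt hε0), ENNReal.ofReal_one]

/-- Single-compression-map bound: for a fixed `σ`, the probability of zero
sample loss yet true error exceeding `ε` is at most `(1-ε)^(m-k)`. -/
private lemma compression_per_sigma
    {Z : Type*} [MeasurableSpace Z] (μ : Measure Z) [IsProbabilityMeasure μ]
    (k m : ℕ) (hkm : k ≤ m)
    (F : (Fin k → Z) × Z → ℝ) (hF : Measurable F)
    (hF0 : ∀ w z, 0 ≤ F (w, z)) (hF1 : ∀ w z, F (w, z) ≤ 1)
    (ε : ℝ) (hε0 : 0 < ε) (hε1 : ε < 1) (σ : Fin k → Fin m) :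
    (Measure.pi fun _ : Fin m => μ)
      {s : Fin m → Z | (∀ j : Fin m, F (s ∘ σ, s j) = 0) ∧ ε < ∫ z, F (s ∘ σ, z) ∂μ} ≤
    ENNReal.ofReal ((1 - ε) ^ (m - k)) := by
  classical
  set p : Fin m → Prop := fun i => i ∈ Set.range σ with hp
  letI : Fintype {i : Fin m // p i} := Subtype.fintype p
  -- reconstruct the compression tuple from the coordinates in the range of σ
  set w : ({i : Fin m // p i} → Z) → (Fin k → Z) :=
    fun b i => b ⟨σ i, Set.mem_range_self i⟩ with hwdef
  have hwmeas : Measurable w := measurable_pi_lambda _ fun i => measurable_pi_apply _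
  have hImeas : Measurable fun b => ∫ z, F (w b, z) ∂μ :=
    (hF.stronglyMeasurable.integral_prod_right').measurable.comp hwmeas
  set E' : Set (({i : Fin m // p i} → Z) × ({i : Fin m // ¬ p i} → Z)) :=
    {x | ε < ∫ z, F (w x.1, z) ∂μ} ∩
      ⋂ j : {i : Fin m // ¬ p i}, {x | F (w x.1, x.2 j) = 0} with hE'
  have hE'meas : MeasurableSet E' := by
    refine MeasurableSet.inter ?_ (MeasurableSet.iInter fun j => ?_)
    · exact measurableSet_lt measurable_const (hImeas.comp measurable_fst)
    · have hx : Measurable fun x : (({i : Fin m // p i} → Z) × ({i : Fin m // ¬ p i} → Z)) =>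
          F (w x.1, x.2 j) :=
        hF.comp ((hwmeas.comp measurable_fst).prodMk
          ((measurable_pi_apply j).comp measurable_snd))
      exact hx (measurableSet_singleton 0)
  set e := MeasurableEquiv.piEquivPiSubtypeProd (fun _ : Fin m => Z) p with he
  have hsubset :
      {s : Fin m → Z | (∀ j : Fin m, F (s ∘ σ, s j) = 0) ∧ ε < ∫ z, F (s ∘ σ, z) ∂μ} ⊆
        e ⁻¹' E' := by
    intro s hs
    refine ⟨hs.2, ?_⟩
    simp only [Set.mem_iInter, Set.mem_setOf_eq]
    intro j
    exact hs.1 j.1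
  have hmp := measurePreserving_piEquivPiSubtypeProd (fun _ : Fin m => μ) p
  have hpre : (Measure.pi fun _ : Fin m => μ) (e ⁻¹' E') =
      ((Measure.pi fun _ : {i : Fin m // p i} => μ).prod
        (Measure.pi fun _ : {i : Fin m // ¬ p i} => μ)) E' :=
    hmp.measure_preimage hE'meas.nullMeasurableSet
  -- slice bound
  have hslice : ∀ b : {i : Fin m // p i} → Z,
      (Measure.pi fun _ : {i : Fin m // ¬ p i} => μ) (Prod.mk b ⁻¹' E') ≤
        ENNReal.ofReal (1 - ε) ^ Fintype.card {i : Fin m // ¬ p i} := by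
    intro b
    by_cases hb : ε < ∫ z, F (w b, z) ∂μ
    · have hset : Prod.mk b ⁻¹' E' ⊆
          Set.pi Set.univ (fun _ : {i : Fin m // ¬ p i} => {z | F (w b, z) = 0}) := by
        intro a ha
        rw [Set.mem_univ_pi]
        intro j
        have := ha.2
        simp only [Set.mem_iInter, Set.mem_setOf_eq] at this
        exact this j
      calc (Measure.pi fun _ : {i : Fin m // ¬ p i} => μ) (Prod.mk b ⁻¹' E')
          ≤ (Measure.pi fun _ : {i : Fin m // ¬ p i} => μ)
              (Set.pi Set.univ (fun _ => {z | F (w b, z) = 0})) := measure_mono hset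
        _ = ∏ _j : {i : Fin m // ¬ p i}, μ {z | F (w b, z) = 0} := Measure.pi_pi _ _
        _ ≤ ∏ _j : {i : Fin m // ¬ p i}, ENNReal.ofReal (1 - ε) := by
            refine Finset.prod_le_prod' fun j _ => ?_
            exact zero_loss_prob_le μ F hF hF0 hF1 ε hε0 (w b) hb
        _ = ENNReal.ofReal (1 - ε) ^ Fintype.card {i : Fin m // ¬ p i} := by
            rw [Finset.prod_const, Finset.card_univ]
    · have hempty : Prod.mk b ⁻¹' E' = ∅ := by
        ext a
        simp only [Set.mem_preimage, Set.mem_empty_iff_false, iff_false]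
        intro ha
        exact hb ha.1
      rw [hempty]
      simp
  -- cardinality bound
  have hcard : m - k ≤ Fintype.card {i : Fin m // ¬ p i} := by
    have h1 : Fintype.card {i : Fin m // ¬ p i} =
        Fintype.card (Fin m) - Fintype.card {i : Fin m // p i} :=
      Fintype.card_subtype_compl p
    have h2 : Fintype.card {i : Fin m // p i} ≤ k := by
      have := Fintype.card_range_le σ
      calc Fintype.card {i : Fin m // p i}
          = Fintype.card (Set.range σ) := Fintype.card_congr (Equiv.refl _)
        _ ≤ Fintype.card (Fin k) := Fintype.card_range_le σ
        _ = k := Fintype.card_fin k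
    rw [h1, Fintype.card_fin]
    exact Nat.sub_le_sub_left h2 m
  have hpow : ENNReal.ofReal (1 - ε) ^ Fintype.card {i : Fin m // ¬ p i} ≤
      ENNReal.ofReal ((1 - ε) ^ (m - k)) := by
    rw [← ENNReal.ofReal_pow (by linarith : (0:ℝ) ≤ 1 - ε)]
    exact ENNReal.ofReal_le_ofReal
      (pow_le_pow_of_le_one (by linarith) (by linarith) hcard)
  calc (Measure.pi fun _ : Fin m => μ)
        {s : Fin m → Z | (∀ j : Fin m, F (s ∘ σ, s j) = 0) ∧ ε < ∫ z, F (s ∘ σ, z) ∂μ}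
      ≤ (Measure.pi fun _ : Fin m => μ) (e ⁻¹' E') := measure_mono hsubset
    _ = ((Measure.pi fun _ : {i : Fin m // p i} => μ).prod
          (Measure.pi fun _ : {i : Fin m // ¬ p i} => μ)) E' := hpre
    _ = ∫⁻ b, (Measure.pi fun _ : {i : Fin m // ¬ p i} => μ) (Prod.mk b ⁻¹' E')
          ∂(Measure.pi fun _ : {i : Fin m // p i} => μ) := Measure.prod_apply hE'meas
    _ ≤ ∫⁻ _b, ENNReal.ofReal (1 - ε) ^ Fintype.card {i : Fin m // ¬ p i}
          ∂(Measure.pi fun _ : {i : Fin m // p i} => μ) := lintegral_mono hslice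
    _ = ENNReal.ofReal (1 - ε) ^ Fintype.card {i : Fin m // ¬ p i} := by
        rw [lintegral_const, measure_univ, mul_one]
    _ ≤ ENNReal.ofReal ((1 - ε) ^ (m - k)) := hpow

/-- Realizable sample compression generalization (concentration form): if
`F (w, z) ∈ [0,1]` is the loss at `z` of the predictor reconstructed from the
compression tuple `w`, then the probability, over an i.i.d. sample `s` of size
`m`, that some compression map `σ : Fin k → Fin m` yields zero loss on the whole
sample yet true error greater than `ε`, is at most `m^k · (1 − ε)^(m − k)`. -/
theorem realizable_compression_generalization
    {Z : Type*} [MeasurableSpace Z] (μ : Measure Z) [IsProbabilityMeasure μ]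
    (k m : ℕ) (hkm : k ≤ m)
    (F : (Fin k → Z) × Z → ℝ) (hF : Measurable F)
    (hF0 : ∀ w z, 0 ≤ F (w, z)) (hF1 : ∀ w z, F (w, z) ≤ 1)
    (ε : ℝ) (hε0 : 0 < ε) (hε1 : ε < 1) :
    (Measure.pi fun _ : Fin m => μ)
      {s : Fin m → Z | ∃ σ : Fin k → Fin m,
        (∀ j : Fin m, F (s ∘ σ, s j) = 0) ∧ ε < ∫ z, F (s ∘ σ, z) ∂μ} ≤
      ENNReal.ofReal ((m : ℝ) ^ k * (1 - ε) ^ (m - k)) := by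
  classical
  have hunion : {s : Fin m → Z | ∃ σ : Fin k → Fin m,
        (∀ j : Fin m, F (s ∘ σ, s j) = 0) ∧ ε < ∫ z, F (s ∘ σ, z) ∂μ} =
      ⋃ σ : Fin k → Fin m,
        {s : Fin m → Z | (∀ j : Fin m, F (s ∘ σ, s j) = 0) ∧ ε < ∫ z, F (s ∘ σ, z) ∂μ} := by
    ext s
    simp only [Set.mem_setOf_eq, Set.mem_iUnion]
  rw [hunion]
  calc (Measure.pi fun _ : Fin m => μ)
        (⋃ σ : Fin k → Fin m,
          {s : Fin m → Z | (∀ j : Fin m, F (s ∘ σ, s j) = 0) ∧ ε < ∫ z, F (s ∘ σ, z) ∂μ})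
      ≤ ∑' σ : Fin k → Fin m, (Measure.pi fun _ : Fin m => μ)
          {s : Fin m → Z | (∀ j : Fin m, F (s ∘ σ, s j) = 0) ∧ ε < ∫ z, F (s ∘ σ, z) ∂μ} :=
        measure_iUnion_le _
    _ = ∑ σ : Fin k → Fin m, (Measure.pi fun _ : Fin m => μ)
          {s : Fin m → Z | (∀ j : Fin m, F (s ∘ σ, s j) = 0) ∧ ε < ∫ z, F (s ∘ σ, z) ∂μ} :=
        tsum_fintype _
    _ ≤ (Finset.univ : Finset (Fin k → Fin m)).card • ENNReal.ofReal ((1 - ε) ^ (m - k)) :=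
        Finset.sum_le_card_nsmul _ _ _
          (fun σ _ => compression_per_sigma μ k m hkm F hF hF0 hF1 ε hε0 hε1 σ)
    _ = ENNReal.ofReal ((m : ℝ) ^ k * (1 - ε) ^ (m - k)) := by
        rw [Finset.card_univ, Fintype.card_fun, Fintype.card_fin, Fintype.card_fin,
          nsmul_eq_mul, ENNReal.ofReal_mul (by positivity)]
        congr 1
        rw [ENNReal.ofReal_pow (by positivity), ENNReal.ofReal_natCast]
        push_cast
        ring
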